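/- Let γ ≥ 0 be an integer and let S be a γ-hyperelliptic numerical semigroup of genus g with g ≥ 2γ+1. Then the K-weight of S satisfies C(g-2γ, 2) + 2γ ≤ W_K ≤ C(g-2γ, 2) + 2γ², where C(n,2) denotes the binomial coefficient n choose 2. -/

import Mathlib

/-- A numerical semigroup: a subset of ℕ containing 0, closed under addition,
with finite complement. -/
def IsNumericalSemigroup (S : Set ℕ) : Prop :=
  0 ∈ S ∧ (∀ a ∈ S, ∀ b ∈ S, a + b ∈ S) ∧ Sᶜ.Finite

/-- The genus of `S`: the number of gaps (elements of ℕ not in `S`). -/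
noncomputable def genus (S : Set ℕ) : ℕ := Sᶜ.ncard

/-- `gap S i` is the `(i+1)`-st smallest gap of `S`, i.e. `ℓ_{i+1}` (0-indexed). -/
noncomputable def gap (S : Set ℕ) (i : ℕ) : ℕ := Nat.nth (fun n => n ∉ S) i

/-- The K-weight of `S`: `W_K = Σ_{i=1}^{g-1} (ℓ_i - i) + g - 1`. -/
noncomputable def Kweight (S : Set ℕ) : ℕ :=
  (∑ i ∈ Finset.range (genus S - 1), (gap S i - (i + 1))) + genus S - 1

/-- The S-weight of `S`: `W_S = Σ_{i=1}^{g} (ℓ_i - i)`. -/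
noncomputable def Sweight (S : Set ℕ) : ℕ :=
  ∑ i ∈ Finset.range (genus S), (gap S i - (i + 1))

/-- `S` is γ-hyperelliptic: it has exactly γ even elements in `[2, 4γ]`, and the
`(γ+1)`-st smallest positive element of `S` is `4γ+2`. -/
def GammaHyperelliptic (γ : ℕ) (S : Set ℕ) : Prop :=
  {n | n ∈ Set.Icc 2 (4 * γ) ∧ Even n ∧ n ∈ S}.ncard = γ ∧
  Nat.nth (fun n => n ∈ S ∧ n ≠ 0) γ = 4 * γ + 2

open Finset

/-! ### Auxiliary combinatorial lemmas -/

lemma sum_two_mul_add_one (n : ℕ) : ∑ k ∈ range n, (2 * k + 1) = n ^ 2 := by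
  induction n with
  | zero => simp
  | succ n ih => rw [sum_range_succ, ih]; ring

lemma two_mul_sum_range_succ (n : ℕ) : 2 * ∑ i ∈ range n, (i + 1) = n * (n + 1) := by
  induction n with
  | zero => simp
  | succ n ih => rw [sum_range_succ, Nat.mul_add, ih]; ring

lemma choose_two_mul_two (n : ℕ) : n.choose 2 * 2 + n = n * n := by
  induction n with
  | zero => simp
  | succ n ih =>
    have h3 : (n+1).choose 2 = n + n.choose 2 := by
      rw [Nat.choose_succ_succ, Nat.choose_one_right]
    have h4 : (n+1)*(n+1) = n*n + n + (n+1) := by ring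
    omega

lemma rank_sum (s : Finset ℕ) : ∑ x ∈ s, #(s.filter (· < x)) = s.card.choose 2 := by
  generalize hn : s.card = n
  induction n generalizing s with
  | zero =>
    rw [Finset.card_eq_zero] at hn; subst hn; simp
  | succ n ih =>
    have hne : s.Nonempty := Finset.card_pos.mp (by omega)
    set M := s.max' hne with hM
    have hMs : M ∈ s := s.max'_mem hne
    have hcard : (s.erase M).card = n := by rw [Finset.card_erase_of_mem hMs, hn]; omega
    have hmax : ∀ x ∈ s, x ≤ M := fun x hx => s.le_max' x hx
    have h1 : s.filter (· < M) = s.erase M := by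
      ext x; simp only [mem_filter, mem_erase]
      constructor
      · rintro ⟨hx, hlt⟩; exact ⟨by omega, hx⟩
      · rintro ⟨hne', hx⟩; exact ⟨hx, lt_of_le_of_ne (hmax x hx) hne'⟩
    have h2 : ∀ x ∈ s.erase M, s.filter (· < x) = (s.erase M).filter (· < x) := by
      intro x hx
      have hxM : x < M := by
        rcases Finset.mem_erase.mp hx with ⟨hne', hxs⟩
        exact lt_of_le_of_ne (hmax x hxs) hne'
      ext y; simp only [mem_filter, mem_erase]
      constructor
      · rintro ⟨hy, hlt⟩; exact ⟨⟨by omega, hy⟩, hlt⟩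
      · rintro ⟨⟨_, hy⟩, hlt⟩; exact ⟨hy, hlt⟩
    have hsplit := Finset.sum_erase_add s (fun x => #(s.filter (· < x))) hMs
    rw [← hsplit]
    have hcongr : ∑ x ∈ s.erase M, #(s.filter (· < x))
        = ∑ x ∈ s.erase M, #((s.erase M).filter (· < x)) :=
      Finset.sum_congr rfl (fun x hx => by rw [h2 x hx])
    rw [hcongr, ih _ hcard]
    show n.choose 2 + #(s.filter (· < M)) = (n+1).choose 2
    rw [h1, Finset.card_erase_of_mem hMs, hn]
    have h3 : (n+1).choose 2 = n + n.choose 2 := by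
      rw [Nat.choose_succ_succ, Nat.choose_one_right]
    omega

lemma rank_sum_le (s : Finset ℕ) :
    ∑ x ∈ s, #(s.filter (· ≤ x)) = s.card.choose 2 + s.card := by
  have h : ∀ x ∈ s, #(s.filter (· ≤ x)) = #(s.filter (· < x)) + 1 := by
    intro x hx
    have : s.filter (· ≤ x) = insert x (s.filter (· < x)) := by
      ext y; simp only [mem_filter, mem_insert]
      constructor
      · rintro ⟨hy, hle⟩
        rcases eq_or_lt_of_le hle with h' | h'
        · exact Or.inl h'
        · exact Or.inr ⟨hy, h'⟩
      · rintro (rfl | ⟨hy, hlt⟩)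
        · exact ⟨hx, le_refl _⟩
        · exact ⟨hy, le_of_lt hlt⟩
    rw [this, Finset.card_insert_of_notMem (by simp)]
  rw [Finset.sum_congr rfl h, Finset.sum_add_distrib, rank_sum, Finset.sum_const,
    smul_eq_mul, mul_one]

lemma card_even_Icc (n : ℕ) : #((Icc 1 n).filter (fun y => Even y)) = n / 2 := by
  have h1 : Icc 1 n = Ioc 0 n := by
    ext x; simp [Nat.lt_iff_add_one_le]
  rw [h1]
  have h2 : (Ioc 0 n).filter (fun y => Even y) = (Ioc 0 n).filter (fun y => 2 ∣ y) := by
    apply Finset.filter_congr; intro x _; simp [even_iff_two_dvd]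
  rw [h2]
  exact Nat.Ioc_filter_dvd_card_eq_div n 2

lemma card_odd_Icc (n : ℕ) : #((Icc 1 n).filter (fun y => ¬ Even y)) = n - n / 2 := by
  have := Finset.card_filter_add_card_filter_not (s := Icc 1 n)
    (p := fun y => Even y)
  rw [card_even_Icc] at this
  have hc : #(Icc 1 n) = n := by rw [Nat.card_Icc]; omega
  omega

/-! ### Structure of γ-hyperelliptic semigroups -/

lemma hyper_struct (γ : ℕ) (S : Set ℕ) (L : Finset ℕ)
    (hS : IsNumericalSemigroup S) (hγ : GammaHyperelliptic γ S)
    (hL : ∀ x, x ∈ L ↔ x ∉ S) :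
    (4*γ+2 ∈ S) ∧
    (∀ n, n ∈ S → n ≠ 0 → n < 4*γ+2 → Even n ∧ 2 ≤ n ∧ n ≤ 4*γ) ∧
    #((Finset.Icc 2 (4*γ)).filter (fun n => Even n ∧ n ∉ L)) = γ := by
  obtain ⟨h0, hadd, hfin⟩ := hS
  set p := fun n => n ∈ S ∧ n ≠ 0 with hp
  haveI : DecidablePred p := Classical.decPred p
  have hinf : (setOf p).Infinite := by
    have h1 : Sᶜᶜ.Infinite := hfin.infinite_compl
    rw [compl_compl] at h1
    have h2 : (S \ {0}).Infinite := h1.diff (Set.finite_singleton 0)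
    have h3 : setOf p = S \ {0} := by ext x; simp [hp]; exact Iff.rfl
    rwa [h3]
  have hmem : 4*γ+2 ∈ S := by
    have := Nat.nth_mem_of_infinite hinf γ
    rw [hγ.2] at this
    exact this.1
  have hcount : Nat.count p (4*γ+2) = γ := by
    have := Nat.count_nth_of_infinite hinf γ
    rwa [hγ.2] at this
  set A := (Finset.Icc 2 (4*γ)).filter (fun n => Even n ∧ n ∉ L) with hA
  set B := (Finset.range (4*γ+2)).filter p with hB
  have hAcard : #A = γ := by
    have hset : {n | n ∈ Set.Icc 2 (4 * γ) ∧ Even n ∧ n ∈ S} = ↑A := by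
      ext x
      simp only [hA, Set.mem_setOf_eq, Set.mem_Icc, Finset.coe_filter, mem_Icc, hL]
      tauto
    have := hγ.1
    rwa [hset, Set.ncard_coe_finset] at this
  have hBcard : #B = γ := by
    rw [hB, ← Nat.count_eq_card_filter_range, hcount]
  have hAB : A ⊆ B := by
    intro n hn
    simp only [hA, mem_filter, mem_Icc, hL, not_not] at hn
    obtain ⟨⟨h2, h4⟩, he, hnS⟩ := hn
    simp only [hB, mem_filter, mem_range, hp]
    exact ⟨by omega, hnS, by omega⟩
  have hABeq : A = B := Finset.eq_of_subset_of_card_le hAB (by omega)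
  refine ⟨hmem, ?_, hAcard⟩
  intro n hnS hn0 hlt
  have hnB : n ∈ B := by
    simp only [hB, mem_filter, mem_range, hp]
    exact ⟨hlt, hnS, hn0⟩
  rw [← hABeq] at hnB
  simp only [hA, mem_filter, mem_Icc] at hnB
  exact ⟨hnB.2.1, hnB.1.1, hnB.1.2⟩

lemma even_mem (γ : ℕ) (S : Set ℕ) (L : Finset ℕ)
    (hS : IsNumericalSemigroup S) (hγ : GammaHyperelliptic γ S)
    (hL : ∀ x, x ∈ L ↔ x ∉ S) :
    ∀ n, Even n → 4*γ+2 ≤ n → n ∈ S := by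
  obtain ⟨h42, hpos, hAcard⟩ := hyper_struct γ S L hS hγ hL
  obtain ⟨h0, hadd, hfin⟩ := hS
  set G := (Finset.Icc 2 (4*γ)).filter (fun y => Even y ∧ y ∈ L) with hG
  have hGcard : #G = γ := by
    have hsplit := Finset.card_filter_add_card_filter_not
      (s := (Finset.Icc 2 (4*γ)).filter (fun y => Even y)) (p := fun y => y ∈ L)
    have e1 : ((Finset.Icc 2 (4*γ)).filter (fun y => Even y)).filter (fun y => y ∈ L) = G := by
      rw [hG, Finset.filter_filter]
    have e2 : ((Finset.Icc 2 (4*γ)).filter (fun y => Even y)).filter (fun y => ¬ y ∈ L)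
        = (Finset.Icc 2 (4*γ)).filter (fun n => Even n ∧ n ∉ L) := by
      rw [Finset.filter_filter]
    have heq : (Finset.Icc 2 (4*γ)).filter (fun y => Even y)
        = (Finset.Icc 1 (4*γ)).filter (fun y => Even y) := by
      ext y
      simp only [mem_filter, mem_Icc]
      constructor
      · rintro ⟨⟨a, b⟩, c⟩; exact ⟨⟨by omega, b⟩, c⟩
      · rintro ⟨⟨a, b⟩, c⟩
        refine ⟨⟨?_, b⟩, c⟩
        rcases c with ⟨k, hk⟩
        omega
    rw [e1, e2, hAcard] at hsplit
    rw [heq] at hsplit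
    rw [card_even_Icc] at hsplit
    have : 4*γ/2 = 2*γ := by omega
    omega
  intro n
  induction n using Nat.strong_induction_on with
  | _ n ih =>
    intro hev hge
    by_contra hnS
    have hne : n ≠ 4*γ+2 := by rintro rfl; exact hnS h42
    have hn44 : 4*γ+4 ≤ n := by
      rcases hev with ⟨k, hk⟩
      omega
    have hmaps : ∀ k ∈ Finset.Icc 1 (γ+1),
        (if 2*k ∈ L then 2*k else n - 2*k) ∈ G := by
      intro k hk
      rw [Finset.mem_Icc] at hk
      by_cases h2k : 2*k ∈ L
      · simp only [if_pos h2k]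
        have hγpos : 1 ≤ γ := by
          by_contra hγ0
          have hγ0' : γ = 0 := by omega
          subst hγ0'
          have hk1 : k = 1 := by omega
          subst hk1
          exact (hL 2).mp h2k (by simpa using h42)
        rw [hG, mem_filter, Finset.mem_Icc]
        exact ⟨⟨by omega, by omega⟩, ⟨k, by omega⟩, h2k⟩
      · simp only [if_neg h2k]
        have h2kS : 2*k ∈ S := by
          by_contra hc
          exact h2k ((hL (2*k)).mpr hc)
        have hlt : 2*k < n := by omega
        have hsub : n - 2*k ∉ S := by
          intro hmem
          have := hadd _ h2kS _ hmem
          rw [Nat.add_sub_cancel' (by omega)] at this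
          exact hnS this
        have hevsub : Even (n - 2*k) := by
          rcases hev with ⟨a, ha⟩
          exact ⟨a - k, by omega⟩
        have hsmall : n - 2*k ≤ 4*γ+1 := by
          by_contra hbig
          exact hsub (ih (n - 2*k) (by omega) hevsub (by omega))
        have hle4γ : n - 2*k ≤ 4*γ := by
          rcases hevsub with ⟨a, ha⟩
          omega
        rw [hG, mem_filter, Finset.mem_Icc, hL]
        exact ⟨⟨by omega, hle4γ⟩, hevsub, hsub⟩
    have hinj : Set.InjOn (fun k => if 2*k ∈ L then 2*k else n - 2*k)
        ↑(Finset.Icc 1 (γ+1)) := by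
      intro a ha b hb hab
      simp only [Finset.coe_Icc, Set.mem_Icc] at ha hb
      obtain ⟨ha1, ha2⟩ := ha
      obtain ⟨hb1, hb2⟩ := hb
      by_cases h2a : 2*a ∈ L <;> by_cases h2b : 2*b ∈ L <;>
        simp only [if_pos, if_neg, h2a, h2b, if_true, if_false] at hab
      · omega
      · -- 2a = n - 2b : n = 2a + 2b ≤ 4γ+4 ≤ n forces a = b = γ+1
        have h1 : n = 2*a + 2*b := by omega
        have h2 : a = γ+1 ∧ b = γ+1 := by omega
        have : (2*a ∈ L) = (2*b ∈ L) := by rw [h2.1, h2.2]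
        rw [this] at h2a
        exact absurd h2a h2b
      · have h1 : n = 2*a + 2*b := by omega
        have h2 : a = γ+1 ∧ b = γ+1 := by omega
        have : (2*a ∈ L) = (2*b ∈ L) := by rw [h2.1, h2.2]
        rw [this] at h2a
        exact absurd h2b h2a
      · omega
    have hcard := Finset.card_le_card_of_injOn _ hmaps hinj
    rw [hGcard, Nat.card_Icc] at hcard
    omega

theorem Kweight_bounds (γ g : ℕ) (S : Set ℕ)
    (hS : IsNumericalSemigroup S) (hγ : GammaHyperelliptic γ S)
    (hg : genus S = g) (hgen : 2 * γ + 1 ≤ g) :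
    Nat.choose (g - 2 * γ) 2 + 2 * γ ≤ Kweight S ∧
      Kweight S ≤ Nat.choose (g - 2 * γ) 2 + 2 * γ ^ 2 := by
  obtain ⟨h0, hadd, hfin⟩ := hS
  set L := hfin.toFinset with hLdef
  have hL : ∀ x, x ∈ L ↔ x ∉ S := by
    intro x; rw [hLdef, Set.Finite.mem_toFinset]; rfl
  have hgL : g = #L := by
    rw [← hg]
    show Sᶜ.ncard = #L
    rw [Set.ncard_eq_toFinset_card Sᶜ hfin]
  obtain ⟨h42, hpos, hAcard⟩ := hyper_struct γ S L ⟨h0, hadd, hfin⟩ hγ hL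
  have hEM := even_mem γ S L ⟨h0, hadd, hfin⟩ hγ hL
  have hOddGap : ∀ y, ¬ Even y → y ≤ 4*γ+1 → y ∈ L := by
    intro y hodd hle
    rw [hL]
    intro hyS
    have hy0 : y ≠ 0 := by rintro rfl; exact hodd Even.zero
    exact hodd (hpos y hyS hy0 (by omega)).1
  have h1L : (1:ℕ) ∈ L := hOddGap 1 (by decide) (by omega)
  have h0L : (0:ℕ) ∉ L := fun h => (hL 0).mp h h0
  -- the three pieces of the gap set
  set Gsm := L.filter (fun y => ¬ Even y ∧ y ≤ 4*γ+1) with hGsmdef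
  set Gev := L.filter (fun y => Even y) with hGevdef
  set Gbig := L.filter (fun y => ¬ Even y ∧ 4*γ+1 < y) with hGbigdef
  set m := #Gbig with hmdef
  -- F1 : small odd gaps
  have hGsm_eq : Gsm = (Icc 1 (4*γ+1)).filter (fun y => ¬ Even y) := by
    ext y
    simp only [hGsmdef, mem_filter, mem_Icc]
    constructor
    · rintro ⟨hyL, hodd, hle⟩
      have : y ≠ 0 := by rintro rfl; exact hodd Even.zero
      exact ⟨⟨by omega, hle⟩, hodd⟩
    · rintro ⟨⟨h1, h2⟩, hodd⟩
      exact ⟨hOddGap y hodd h2, hodd, h2⟩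
  have hGsm_card : #Gsm = 2*γ+1 := by
    rw [hGsm_eq, card_odd_Icc]
    omega
  -- F3/F4 : even gaps
  have hGev_bounds : ∀ y ∈ Gev, 2 ≤ y ∧ y ≤ 4*γ := by
    intro y hy
    simp only [hGevdef, mem_filter] at hy
    obtain ⟨hyL, hev⟩ := hy
    have hy0 : y ≠ 0 := by rintro rfl; exact h0L hyL
    have hyS : y ∉ S := (hL y).mp hyL
    have hle : ¬ (4*γ+2 ≤ y) := fun h => hyS (hEM y hev h)
    rcases hev with ⟨a, ha⟩
    constructor <;> omega
  have hGev_eq : Gev = (Icc 2 (4*γ)).filter (fun y => Even y ∧ y ∈ L) := by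
    ext y
    simp only [hGevdef, mem_filter, mem_Icc]
    constructor
    · rintro ⟨hyL, hev⟩
      have := hGev_bounds y (by simp only [hGevdef, mem_filter]; exact ⟨hyL, hev⟩)
      exact ⟨this, hev, hyL⟩
    · rintro ⟨_, hev, hyL⟩
      exact ⟨hyL, hev⟩
  have hGev_card : #Gev = γ := by
    rw [hGev_eq]
    have hsplit := Finset.card_filter_add_card_filter_not
      (s := (Finset.Icc 2 (4*γ)).filter (fun y => Even y)) (p := fun y => y ∈ L)
    have e1 : ((Finset.Icc 2 (4*γ)).filter (fun y => Even y)).filter (fun y => y ∈ L)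
        = (Icc 2 (4*γ)).filter (fun y => Even y ∧ y ∈ L) := by
      rw [Finset.filter_filter]
    have e2 : ((Finset.Icc 2 (4*γ)).filter (fun y => Even y)).filter (fun y => ¬ y ∈ L)
        = (Finset.Icc 2 (4*γ)).filter (fun n => Even n ∧ n ∉ L) := by
      rw [Finset.filter_filter]
    have heq : (Finset.Icc 2 (4*γ)).filter (fun y => Even y)
        = (Finset.Icc 1 (4*γ)).filter (fun y => Even y) := by
      ext y
      simp only [mem_filter, mem_Icc, Nat.even_iff]
      omega
    rw [e1, e2, hAcard, heq, card_even_Icc] at hsplit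
    omega
  -- F5/F6 : partition of L
  have hL_card : #L = 3*γ+1+m := by
    have hsplit1 := Finset.card_filter_add_card_filter_not
      (s := L) (p := fun y => Even y)
    have hsplit2 := Finset.card_filter_add_card_filter_not
      (s := L.filter (fun y => ¬ Even y)) (p := fun y => y ≤ 4*γ+1)
    have e1 : (L.filter (fun y => ¬ Even y)).filter (fun y => y ≤ 4*γ+1) = Gsm := by
      rw [hGsmdef, Finset.filter_filter]
    have e2 : (L.filter (fun y => ¬ Even y)).filter (fun y => ¬ y ≤ 4*γ+1) = Gbig := by
      rw [hGbigdef, Finset.filter_filter]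
      apply Finset.filter_congr
      intro y _
      constructor
      · rintro ⟨h1, h2⟩; exact ⟨h1, by omega⟩
      · rintro ⟨h1, h2⟩; exact ⟨h1, by omega⟩
    rw [e1, e2, hGsm_card] at hsplit2
    rw [hGev_card] at hsplit1
    omega
  -- F7-F9 : the largest gap
  have hLne : L.Nonempty := ⟨1, h1L⟩
  set F := L.max' hLne with hFdef
  have hFmem : F ∈ L := L.max'_mem hLne
  have hFmax : ∀ x ∈ L, x ≤ F := fun x hx => L.le_max' x hx
  have hF41 : 4*γ+1 ≤ F := hFmax _ (hOddGap (4*γ+1) (by simp [Nat.even_iff]; omega) (by omega))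
  have hFbig : Gbig.Nonempty → F ∈ Gbig := by
    intro ⟨o, ho⟩
    have hoL : o ∈ L := (Finset.mem_filter.mp ho).1
    have hobig : 4*γ+1 < o := (Finset.mem_filter.mp ho).2.2
    have hoF : o ≤ F := hFmax o hoL
    have hFgt : 4*γ+1 < F := by omega
    have hFodd : ¬ Even F := by
      intro hev
      have := (hGev_bounds F (by simp only [hGevdef, mem_filter]; exact ⟨hFmem, hev⟩)).2
      omega
    simp only [hGbigdef, mem_filter]
    exact ⟨hFmem, hFodd, hFgt⟩
  have hFsmall : m = 0 → F = 4*γ+1 := by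
    intro hm0
    have hGbig_empty : Gbig = ∅ := Finset.card_eq_zero.mp (by omega)
    have hFle : F ≤ 4*γ+1 := by
      by_contra hgt
      have hFodd : ¬ Even F := by
        intro hev
        have := (hGev_bounds F (by simp only [hGevdef, mem_filter]; exact ⟨hFmem, hev⟩)).2
        omega
      have : F ∈ Gbig := by
        simp only [hGbigdef, mem_filter]
        exact ⟨hFmem, hFodd, by omega⟩
      rw [hGbig_empty] at this
      exact absurd this (Finset.notMem_empty F)
    omega
  -- the large odd elements below F
  set U := (Finset.Ico (4*γ+2) F).filter (fun u => ¬ Even u ∧ u ∉ L) with hUdef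
  set d := #U with hddef
  have hUS : ∀ u ∈ U, u ∈ S ∧ ¬ Even u ∧ 4*γ+1 < u ∧ u < F := by
    intro u hu
    simp only [hUdef, mem_filter, Finset.mem_Ico] at hu
    refine ⟨?_, hu.2.1, by omega, hu.1.2⟩
    by_contra hc
    exact hu.2.2 ((hL u).mpr hc)
  -- F10 : counting identity for big odd gaps
  have hcount : ∀ o ∈ Gbig,
      o = 4*γ+3 + 2*#(Gbig.filter (· < o)) + 2*#(U.filter (· < o)) := by
    intro o ho
    simp only [hGbigdef, mem_filter] at ho
    obtain ⟨hoL, hodd, hgt⟩ := ho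
    have hoF : o ≤ F := hFmax o hoL
    have hsplitIcc : Icc 1 (o-1) = Icc 1 (4*γ+1) ∪ Icc (4*γ+2) (o-1) := by
      ext y; simp only [mem_union, mem_Icc]; omega
    have hdisj : Disjoint ((Icc 1 (4*γ+1)).filter (fun y => ¬ Even y))
        ((Icc (4*γ+2) (o-1)).filter (fun y => ¬ Even y)) := by
      apply Finset.disjoint_filter_filter
      rw [Finset.disjoint_left]
      intro a ha hb
      rw [mem_Icc] at ha hb
      omega
    have hcard_split : #((Icc 1 (o-1)).filter (fun y => ¬ Even y))
        = #((Icc 1 (4*γ+1)).filter (fun y => ¬ Even y))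
          + #((Icc (4*γ+2) (o-1)).filter (fun y => ¬ Even y)) := by
      rw [hsplitIcc, Finset.filter_union, Finset.card_union_of_disjoint hdisj]
    have e1 := card_odd_Icc (o-1)
    have e2 := card_odd_Icc (4*γ+1)
    have hsplit2 := Finset.card_filter_add_card_filter_not
      (s := (Icc (4*γ+2) (o-1)).filter (fun y => ¬ Even y)) (p := fun y => y ∈ L)
    have eGap : ((Icc (4*γ+2) (o-1)).filter (fun y => ¬ Even y)).filter (fun y => y ∈ L)
        = Gbig.filter (· < o) := by
      ext y
      have hb1 : y ≤ o-1 ↔ y < o := by omega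
      have hb2 : 4*γ+1 < y ↔ 4*γ+2 ≤ y := by omega
      simp only [hGbigdef, mem_filter, mem_Icc]
      constructor
      · rintro ⟨⟨⟨h1, h2⟩, h3⟩, h4⟩
        exact ⟨⟨h4, h3, by omega⟩, by omega⟩
      · rintro ⟨⟨h1, h2, h3⟩, h4⟩
        exact ⟨⟨⟨by omega, by omega⟩, h2⟩, h1⟩
    have eEl : ((Icc (4*γ+2) (o-1)).filter (fun y => ¬ Even y)).filter (fun y => ¬ y ∈ L)
        = U.filter (· < o) := by
      ext y
      have hb1 : y ≤ o-1 ↔ y < o := by omega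
      have hb2 : y < o → y < F := by omega
      simp only [hUdef, mem_filter, mem_Icc, Finset.mem_Ico]
      constructor
      · rintro ⟨⟨⟨h1, h2⟩, h3⟩, h4⟩
        exact ⟨⟨⟨h1, by omega⟩, h3, h4⟩, by omega⟩
      · rintro ⟨⟨⟨h1, h2⟩, h3, h4⟩, h5⟩
        exact ⟨⟨⟨h1, by omega⟩, h3⟩, h4⟩
    rw [eGap, eEl] at hsplit2
    rw [e1, e2] at hcard_split
    rw [Nat.even_iff] at hodd
    omega
  -- F13 : sum of small odd gaps
  have hGsm_sum : ∑ x ∈ Gsm, x = (2*γ+1)^2 := by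
    have himg : Gsm = (range (2*γ+1)).image (fun k => 2*k+1) := by
      rw [hGsm_eq]; ext y
      simp only [mem_filter, mem_Icc, Finset.mem_image, Finset.mem_range, Nat.even_iff]
      constructor
      · rintro ⟨⟨h1, h2⟩, h3⟩
        exact ⟨y/2, by omega, by omega⟩
      · rintro ⟨k, hk, rfl⟩
        omega
    rw [himg, Finset.sum_image (by intro a _ b _ h; simp only at h; omega)]
    exact sum_two_mul_add_one (2*γ+1)
  -- F14 : sum of even gaps
  set Ap := ∑ x ∈ Gev, #((Icc 1 x).filter (fun y => Even y ∧ y ∉ L)) with hApdef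
  have hx_id : ∀ x ∈ Gev, x = 2*#(Gev.filter (· ≤ x))
      + 2*#((Icc 1 x).filter (fun y => Even y ∧ y ∉ L)) := by
    intro x hx
    rw [hGevdef, mem_filter] at hx
    obtain ⟨hxL, hxev⟩ := hx
    have hx2 := card_even_Icc x
    have hsplit := Finset.card_filter_add_card_filter_not
      (s := (Icc 1 x).filter (fun y => Even y)) (p := fun y => y ∈ L)
    have e1 : ((Icc 1 x).filter (fun y => Even y)).filter (fun y => y ∈ L)
        = Gev.filter (· ≤ x) := by
      ext y
      simp only [hGevdef, mem_filter, mem_Icc]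
      constructor
      · rintro ⟨⟨⟨h1, h2⟩, h3⟩, h4⟩
        exact ⟨⟨h4, h3⟩, h2⟩
      · rintro ⟨⟨h1, h2⟩, h3⟩
        have hb := hGev_bounds y (by rw [hGevdef, mem_filter]; exact ⟨h1, h2⟩)
        exact ⟨⟨⟨by omega, h3⟩, h2⟩, h1⟩
    have e2 : ((Icc 1 x).filter (fun y => Even y)).filter (fun y => ¬ y ∈ L)
        = (Icc 1 x).filter (fun y => Even y ∧ y ∉ L) := by
      rw [Finset.filter_filter]
    rw [e1, e2, hx2] at hsplit
    rcases hxev with ⟨a, ha⟩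
    omega
  have hGev_sum : ∑ x ∈ Gev, x = 2*(γ.choose 2) + 2*γ + 2*Ap := by
    rw [Finset.sum_congr rfl hx_id, Finset.sum_add_distrib, ← Finset.mul_sum,
      ← Finset.mul_sum, rank_sum_le, hGev_card, ← hApdef]
    ring
  -- F15 : Ap ≤ choose γ 2
  have hAp_le : Ap ≤ γ.choose 2 := by
    have hle : ∀ x ∈ Gev, #((Icc 1 x).filter (fun y => Even y ∧ y ∉ L))
        ≤ #(Gev.filter (· < x)) := by
      intro x hx
      rw [hGevdef, mem_filter] at hx
      obtain ⟨hxL, hxev⟩ := hx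
      apply Finset.card_le_card_of_injOn (fun y => x - y)
      · intro y hy
        simp only [mem_coe, mem_filter, mem_Icc] at hy
        obtain ⟨⟨hy1, hy2⟩, hyev, hyL⟩ := hy
        have hyS : y ∈ S := by by_contra hc; exact hyL ((hL y).mpr hc)
        have hxS : x ∉ S := (hL x).mp hxL
        have hyne : y ≠ x := by rintro rfl; exact hyL hxL
        have hsubS : x - y ∉ S := by
          intro hmem
          have := hadd _ hyS _ hmem
          rw [Nat.add_sub_cancel' hy2] at this
          exact hxS this
        have hsubL : x - y ∈ L := (hL _).mpr hsubS
        have hsubev : Even (x - y) := by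
          rcases hxev with ⟨a, ha⟩
          rcases hyev with ⟨b, hb⟩
          exact ⟨a - b, by omega⟩
        simp only [hGevdef, mem_coe, mem_filter]
        exact ⟨⟨hsubL, hsubev⟩, by omega⟩
      · intro a ha b hb hab
        simp only [coe_filter, Set.mem_setOf_eq, mem_Icc] at ha hb
        simp only at hab
        omega
    calc Ap ≤ ∑ x ∈ Gev, #(Gev.filter (· < x)) := Finset.sum_le_sum hle
    _ = γ.choose 2 := by rw [rank_sum, hGev_card]
  -- F11 : sum of big odd gaps
  set Q := ∑ o ∈ Gbig.erase F, #(U.filter (· < o)) with hQdef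
  have hUsub_lt_F : U.filter (· < F) = U :=
    Finset.filter_true_of_mem (fun u hu => (hUS u hu).2.2.2)
  have hGbig_sum : ∑ o ∈ Gbig, o = m*(4*γ+3) + 2*(m.choose 2) + 2*(d + Q) := by
    rcases Finset.eq_empty_or_nonempty Gbig with he | hne
    · have hm0 : m = 0 := by rw [hmdef, he]; simp
      have hF := hFsmall hm0
      have hU0 : U = ∅ := by
        apply Finset.eq_empty_of_forall_notMem
        intro u hu
        have h1 := (hUS u hu).2.2
        omega
      have hd0 : d = 0 := by rw [hddef, hU0]; simp
      have hQ0 : Q = 0 := by rw [hQdef, he]; simp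
      rw [he, hm0, hd0, hQ0]
      simp
    · have hFGbig : F ∈ Gbig := hFbig hne
      rw [Finset.sum_congr rfl hcount, Finset.sum_add_distrib, Finset.sum_add_distrib,
        Finset.sum_const, ← Finset.mul_sum, ← Finset.mul_sum, rank_sum, ← hmdef]
      have hesum : ∑ o ∈ Gbig, #(U.filter (· < o))
          = Q + #(U.filter (· < F)) := by
        rw [hQdef]
        exact (Finset.sum_erase_add Gbig _ hFGbig).symm
      rw [hesum, hUsub_lt_F, ← hddef]
      simp only [smul_eq_mul]
      ring
  -- F12 : the value of F
  have hFval : F = 4*γ+1+2*m+2*d := by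
    rcases Finset.eq_empty_or_nonempty Gbig with he | hne
    · have hm0 : m = 0 := by rw [hmdef, he]; simp
      have hF := hFsmall hm0
      have hU0 : U = ∅ := by
        apply Finset.eq_empty_of_forall_notMem
        intro u hu
        have h1 := (hUS u hu).2.2
        omega
      have hd0 : d = 0 := by rw [hddef, hU0]; simp
      omega
    · have hFGbig : F ∈ Gbig := hFbig hne
      have hcF := hcount F hFGbig
      have hrank : Gbig.filter (· < F) = Gbig.erase F := by
        ext y
        simp only [mem_filter, mem_erase]
        constructor
        · rintro ⟨hy, hlt⟩
          exact ⟨by omega, hy⟩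
        · rintro ⟨hne', hy⟩
          have hyL : y ∈ L := by
            rw [hGbigdef, mem_filter] at hy
            exact hy.1
          have := hFmax y hyL
          exact ⟨hy, by omega⟩
      rw [hrank, hUsub_lt_F, Finset.card_erase_of_mem hFGbig, ← hmdef, ← hddef] at hcF
      have hm1 : 1 ≤ m := by
        rw [hmdef]
        exact Finset.card_pos.mpr hne
      omega
  -- F16 : Q ≤ choose γ 2
  have hQ_le : Q ≤ γ.choose 2 := by
    have hswap : Q = ∑ u ∈ U, #((Gbig.erase F).filter (fun o => u < o)) := by
      rw [hQdef]
      rw [Finset.sum_congr rfl (fun o _ => Finset.card_filter _ _), Finset.sum_comm]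
      exact Finset.sum_congr rfl (fun u _ => (Finset.card_filter _ _).symm)
    have hu_le : ∀ u ∈ U, #((Gbig.erase F).filter (fun o => u < o))
        ≤ #(Gev.filter (· < F - u)) := by
      intro u hu
      obtain ⟨huS, huodd, hugt, huF⟩ := hUS u hu
      apply Finset.card_le_card_of_injOn (fun o => o - u)
      · intro o ho
        simp only [mem_coe, mem_filter, mem_erase] at ho
        obtain ⟨⟨honeF, hoGbig⟩, huo⟩ := ho
        rw [hGbigdef, mem_filter] at hoGbig
        obtain ⟨hoL, hoodd, hogt⟩ := hoGbig
        have hoF : o < F := by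
          have := hFmax o hoL
          omega
        have hsubS : o - u ∉ S := by
          intro hmem
          have := hadd _ huS _ hmem
          rw [Nat.add_sub_cancel' (by omega)] at this
          exact (hL o).mp hoL this
        have hsubL : o - u ∈ L := (hL _).mpr hsubS
        have hsubev : Even (o - u) := by
          rw [Nat.even_iff]
          rw [Nat.even_iff] at hoodd huodd
          omega
        simp only [hGevdef, mem_coe, mem_filter]
        exact ⟨⟨hsubL, hsubev⟩, by omega⟩
      · intro a ha b hb hab
        simp only [coe_filter, Set.mem_setOf_eq, mem_erase] at ha hb
        simp only at hab
        omega
    have himg : ∑ u ∈ U, #(Gev.filter (· < F - u))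
        = ∑ x ∈ U.image (fun u => F - u), #(Gev.filter (· < x)) := by
      rw [Finset.sum_image]
      intro a ha b hb hab
      have haF := (hUS a ha).2.2.2
      have hbF := (hUS b hb).2.2.2
      simp only at hab
      omega
    have himgsub : U.image (fun u => F - u) ⊆ Gev := by
      intro x hx
      rw [Finset.mem_image] at hx
      obtain ⟨u, hu, rfl⟩ := hx
      obtain ⟨huS, huodd, hugt, huF⟩ := hUS u hu
      have hFodd : ¬ Even F := by
        intro hev
        have := (hGev_bounds F (by rw [hGevdef, mem_filter]; exact ⟨hFmem, hev⟩)).2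
        omega
      have hsubS : F - u ∉ S := by
        intro hmem
        have := hadd _ huS _ hmem
        rw [Nat.add_sub_cancel' (by omega)] at this
        exact (hL F).mp hFmem this
      have hsubev : Even (F - u) := by
        rw [Nat.not_even_iff] at hFodd huodd
        exact Nat.even_iff.mpr (by omega)
      rw [hGevdef, mem_filter]
      exact ⟨(hL _).mpr hsubS, hsubev⟩
    calc Q = ∑ u ∈ U, #((Gbig.erase F).filter (fun o => u < o)) := hswap
    _ ≤ ∑ u ∈ U, #(Gev.filter (· < F - u)) := Finset.sum_le_sum hu_le
    _ = ∑ x ∈ U.image (fun u => F - u), #(Gev.filter (· < x)) := himg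
    _ ≤ ∑ x ∈ Gev, #(Gev.filter (· < x)) := Finset.sum_le_sum_of_subset himgsub
    _ = γ.choose 2 := by rw [rank_sum, hGev_card]
  -- total sum of gaps
  have hL_sum : ∑ x ∈ L, x = ∑ x ∈ Gsm, x + ∑ x ∈ Gev, x + ∑ x ∈ Gbig, x := by
    have h1 := Finset.sum_filter_add_sum_filter_not L (fun y => Even y) (fun x => x)
    have h2 := Finset.sum_filter_add_sum_filter_not (L.filter (fun y => ¬ Even y))
      (fun y => y ≤ 4*γ+1) (fun x => x)
    have e1 : (L.filter (fun y => ¬ Even y)).filter (fun y => y ≤ 4*γ+1) = Gsm := by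
      rw [hGsmdef, Finset.filter_filter]
    have e2 : (L.filter (fun y => ¬ Even y)).filter (fun y => ¬ y ≤ 4*γ+1) = Gbig := by
      rw [hGbigdef, Finset.filter_filter]
      apply Finset.filter_congr
      intro y _
      constructor
      · rintro ⟨hh1, hh2⟩; exact ⟨hh1, by omega⟩
      · rintro ⟨hh1, hh2⟩; exact ⟨hh1, by omega⟩
    rw [e1, e2] at h2
    rw [← hGevdef] at h1
    omega
  -- the nth bridge
  set p := fun n => n ∉ S with hpdef
  haveI : DecidablePred p := Classical.decPred p
  have hfin' : (Set.ofPred p).Finite := hfin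
  have htoF : hfin'.toFinset = L := by
    ext x
    simp only [Set.Finite.mem_toFinset, Set.mem_setOf_eq]
    exact (hL x).symm
  have hnL : ∀ i, i < #L →
      Nat.nth p i ∈ L ∧ i + 1 ≤ Nat.nth p i ∧ Nat.count p (Nat.nth p i) = i := by
    intro i hi
    have hi' : i < #hfin'.toFinset := by rw [htoF]; exact hi
    have hmem : p (Nat.nth p i) := Nat.nth_mem_of_lt_card hfin' hi'
    have hmemL : Nat.nth p i ∈ L := (hL _).mpr hmem
    have hcnt : Nat.count p (Nat.nth p i) = i := Nat.count_nth_of_lt_card_finite hfin' hi'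
    have hcount_lt : Nat.count p (Nat.nth p i) < Nat.nth p i := by
      have heq := Nat.count_eq_card_filter_range p (Nat.nth p i)
      have hsub : (range (Nat.nth p i)).filter p ⊆ Ico 1 (Nat.nth p i) := by
        intro y hy
        rw [mem_filter, mem_range] at hy
        rw [mem_Ico]
        have hy0 : y ≠ 0 := by rintro rfl; exact hy.2 h0
        omega
      have hc := Finset.card_le_card hsub
      rw [Nat.card_Ico] at hc
      have hnth0 : Nat.nth p i ≠ 0 := by
        rintro hh; rw [hh] at hmem; exact hmem h0
      rw [heq]
      calc #((range (Nat.nth p i)).filter p) ≤ Nat.nth p i - 1 := hc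
      _ < Nat.nth p i := by omega
    exact ⟨hmemL, by omega, hcnt⟩
  have himg : (range (#L)).image (fun i => Nat.nth p i) = L := by
    apply Finset.eq_of_subset_of_card_le
    · intro x hx
      rw [Finset.mem_image] at hx
      obtain ⟨i, hi, rfl⟩ := hx
      exact (hnL i (mem_range.mp hi)).1
    · rw [Finset.card_image_of_injOn, card_range]
      intro a ha b hb hab
      have ha' := (hnL a (mem_range.mp (Finset.mem_coe.mp ha))).2.2
      have hb' := (hnL b (mem_range.mp (Finset.mem_coe.mp hb))).2.2
      simp only at hab
      rw [← ha', ← hb', hab]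
  have hsum_nth : ∑ i ∈ range (#L), Nat.nth p i = ∑ x ∈ L, x := by
    have hinj : ∀ a ∈ range (#L), ∀ b ∈ range (#L),
        Nat.nth p a = Nat.nth p b → a = b := by
      intro a ha b hb hab
      have ha' := (hnL a (mem_range.mp ha)).2.2
      have hb' := (hnL b (mem_range.mp hb)).2.2
      rw [← ha', ← hb', hab]
    have hs := Finset.sum_image (s := range (#L)) (g := fun i => Nat.nth p i)
      (f := fun x => x) hinj
    rw [himg] at hs
    exact hs.symm
  have hlast : Nat.nth p (#L - 1) = F := by
    have hLpos : 1 ≤ #L := Finset.card_pos.mpr hLne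
    have h1 : Nat.nth p (#L - 1) ∈ L := (hnL _ (by omega)).1
    have h2 : Nat.nth p (#L - 1) ≤ F := hFmax _ h1
    have hFp : p F := (hL F).mp hFmem
    have h3 : Nat.nth p (Nat.count p F) = F := Nat.nth_count hFp
    have h4 : Nat.count p F < #L := by
      have := Nat.count_lt_card hfin' hFp
      rwa [htoF] at this
    have h5 : Nat.nth p (Nat.count p F) ≤ Nat.nth p (#L - 1) :=
      Nat.nth_le_nth_of_lt_card hfin' (by omega) (by rw [htoF]; omega)
    omega
  -- assembling the weight
  have hgenusS : genus S = 3*γ+1+m := by omega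
  have hKW : Kweight S + 1 = (∑ i ∈ range (3*γ+m), (Nat.nth p i - (i+1))) + (3*γ+1+m) := by
    show (∑ i ∈ Finset.range (genus S - 1), (gap S i - (i + 1))) + genus S - 1 + 1 = _
    rw [hgenusS]
    have hr : 3*γ+1+m-1 = 3*γ+m := by omega
    rw [hr]
    have hgap : ∀ i, gap S i = Nat.nth p i := fun i => rfl
    simp only [hgap]
    omega
  set X := ∑ i ∈ range (3*γ+m), (Nat.nth p i - (i+1)) with hXdef
  set T2 := ∑ i ∈ range (3*γ+m), (i+1) with hT2def
  set T1 := ∑ i ∈ range (3*γ+m), Nat.nth p i with hT1def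
  have hXT : X + T2 = T1 := by
    rw [hXdef, hT2def, hT1def, ← Finset.sum_add_distrib]
    apply Finset.sum_congr rfl
    intro i hi
    rw [mem_range] at hi
    have := (hnL i (by omega)).2.1
    omega
  have hT1F : T1 + F = ∑ x ∈ L, x := by
    have hLeq : #L = (3*γ+m) + 1 := by omega
    rw [hLeq] at hsum_nth
    rw [Finset.sum_range_succ] at hsum_nth
    have hlast' : Nat.nth p (3*γ+m) = F := by
      have : #L - 1 = 3*γ+m := by omega
      rw [← this]
      exact hlast
    rw [hlast'] at hsum_nth
    exact hsum_nth
  have h2T2 : 2*T2 = (3*γ+m)*(3*γ+m+1) := two_mul_sum_range_succ (3*γ+m)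
  -- final arithmetic
  have hchoose_main : (g - 2*γ).choose 2 * 2 + (γ+m+1) = (γ+m+1)*(γ+m+1) := by
    have hgval : g - 2*γ = γ+m+1 := by omega
    rw [hgval]
    exact choose_two_mul_two (γ+m+1)
  have hchooseγ : γ.choose 2 * 2 + γ = γ*γ := choose_two_mul_two γ
  have hchoosem : m.choose 2 * 2 + m = m*m := choose_two_mul_two m
  have hring1 : 2*((2*γ+1)^2) + 2*(m*(4*γ+3)) + 2*(γ*γ) + 2*(m*m)
      = (γ+m+1)*(γ+m+1) + 3*γ + (3*γ+m)*(3*γ+m+1) + 3*m + 1 := by ring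
  have hsq : γ^2 = γ*γ := pow_two γ
  constructor
  · omega
  · omega
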